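/- The Integrated Gradients method satisfies affine scale invariance: for any index i, constants c ≠ 0 and d, and the affine transformation T(x) := (x_1, ..., c·x_i + d, ..., x_n), whenever x̄, x', T(x̄), T(x') ∈ [a,b] and IG(x̄, x', F) is defined for a continuously differentiable F, one has IG(x̄, x', F) = IG(T(x̄), T(x'), F ∘ T⁻¹). -/

import Mathlib

open MeasureTheory



open MeasureTheory

/-- The partial derivative of `F : ℝⁿ → ℝ` in the `i`-th coordinate at `x`. -/
noncomputable def pderiv' {n : ℕ} (F : (Fin n → ℝ) → ℝ) (i : Fin n) (x : Fin n → ℝ) : ℝ :=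
  deriv (fun t => F (Function.update x i t)) (x i)

/-- The Integrated Gradients attribution:
`IG_i(x̄, x', F) = (x̄_i − x'_i) ∫₀¹ (∂F/∂x_i)(x' + t(x̄ − x')) dt`. -/
noncomputable def IG {n : ℕ} (xbar x' : Fin n → ℝ) (F : (Fin n → ℝ) → ℝ) : Fin n → ℝ :=
  fun i => (xbar i - x' i) * ∫ t in (0:ℝ)..1, pderiv' F i (x' + t • (xbar - x'))

/-- The affine transformation `T(x) = (x_1, ..., c·x_i + d, ..., x_n)`. -/
def affineT {n : ℕ} (i : Fin n) (c d : ℝ) (x : Fin n → ℝ) : Fin n → ℝ :=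
  Function.update x i (c * x i + d)

/-- The inverse affine transformation `T⁻¹(x) = (x_1, ..., (x_i − d)/c, ..., x_n)`. -/
noncomputable def affineTinv {n : ℕ} (i : Fin n) (c d : ℝ) (x : Fin n → ℝ) : Fin n → ℝ :=
  Function.update x i ((x i - d) / c)

/-- **Affine scale invariance of Integrated Gradients**: for any index `i`, constants
`c ≠ 0` and `d`, and `T(x) = (x_1, ..., c·x_i + d, ..., x_n)`, whenever
`x̄, x', T(x̄), T(x') ∈ [a,b]` and `F` is continuously differentiable on `[a,b]`, one has
`IG(x̄, x', F) = IG(T(x̄), T(x'), F ∘ T⁻¹)`. -/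

lemma deriv_affine_comp (f : ℝ → ℝ) (c d t : ℝ) (hc : c ≠ 0) :
    deriv (fun s => f ((s - d) / c)) (c * t + d) = c⁻¹ * deriv f t := by
  have key : (c * t + d - d) / c = t := by field_simp; ring
  have hh : HasDerivAt (fun s : ℝ => (s - d) / c) c⁻¹ (c * t + d) := by
    simpa using ((hasDerivAt_id (c * t + d)).sub_const d).div_const c
  by_cases hf : DifferentiableAt ℝ f t
  · have h2 : HasDerivAt f (deriv f t) ((c * t + d - d) / c) := by
      rw [key]; exact hf.hasDerivAt
    have := h2.comp (c * t + d) hh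
    rw [show (fun s => f ((s - d) / c)) = f ∘ fun s => (s - d) / c from rfl, this.deriv]; ring
  · have h1 : ¬ DifferentiableAt ℝ (fun s => f ((s - d) / c)) (c * t + d) := by
      intro h
      apply hf
      have hg : HasDerivAt (fun u : ℝ => c * u + d) c t := by
        simpa using ((hasDerivAt_id t).const_mul c).add_const d
      have := h.comp t hg.differentiableAt
      have heq : ((fun s => f ((s - d) / c)) ∘ fun u : ℝ => c * u + d) = f := by
        funext u; simp [Function.comp]; congr 1; field_simp
      rwa [heq] at this
    rw [deriv_zero_of_not_differentiableAt h1, deriv_zero_of_not_differentiableAt hf, mul_zero]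

lemma Tinv_update_ne {n : ℕ} (i j : Fin n) (hij : j ≠ i) (c d : ℝ) (hc : c ≠ 0)
    (y : Fin n → ℝ) (t : ℝ) :
    affineTinv i c d (Function.update (affineT i c d y) j t) = Function.update y j t := by
  funext k
  by_cases hki : k = i
  · subst hki
    simp [affineTinv, affineT, Function.update_of_ne hij, Function.update_of_ne (Ne.symm hij)]
    field_simp
  · by_cases hkj : k = j
    · subst hkj
      simp [affineTinv, affineT, Function.update_of_ne hki]
    · simp [affineTinv, affineT, Function.update_of_ne hki, Function.update_of_ne hkj]

lemma Tinv_update_eq {n : ℕ} (i : Fin n) (c d : ℝ) (y : Fin n → ℝ) (s : ℝ) :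
    affineTinv i c d (Function.update (affineT i c d y) i s) = Function.update y i ((s - d) / c) := by
  funext k
  by_cases hki : k = i
  · subst hki; simp [affineTinv, affineT]
  · simp [affineTinv, affineT, Function.update_of_ne hki]

lemma path_eq {n : ℕ} (i : Fin n) (c d : ℝ) (xbar x' : Fin n → ℝ) (t : ℝ) :
    affineT i c d x' + t • (affineT i c d xbar - affineT i c d x')
      = affineT i c d (x' + t • (xbar - x')) := by
  funext k
  by_cases hki : k = i
  · subst hki; simp [affineT]; ring
  · simp [affineT, Function.update_of_ne hki]

lemma pderiv_ne {n : ℕ} (F : (Fin n → ℝ) → ℝ) (i j : Fin n) (hij : j ≠ i) (c d : ℝ)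
    (hc : c ≠ 0) (y : Fin n → ℝ) :
    pderiv' (F ∘ affineTinv i c d) j (affineT i c d y) = pderiv' F j y := by
  unfold pderiv'
  have h1 : ∀ t, (F ∘ affineTinv i c d) (Function.update (affineT i c d y) j t)
      = F (Function.update y j t) := fun t => by
    simp [Function.comp, Tinv_update_ne i j hij c d hc y t]
  have h2 : affineT i c d y j = y j := Function.update_of_ne hij _ _
  simp only [h1, h2]

lemma pderiv_eq {n : ℕ} (F : (Fin n → ℝ) → ℝ) (i : Fin n) (c d : ℝ)
    (hc : c ≠ 0) (y : Fin n → ℝ) :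
    pderiv' (F ∘ affineTinv i c d) i (affineT i c d y) = c⁻¹ * pderiv' F i y := by
  unfold pderiv'
  have h1 : ∀ s, (F ∘ affineTinv i c d) (Function.update (affineT i c d y) i s)
      = F (Function.update y i ((s - d) / c)) := fun s => by
    simp [Function.comp, Tinv_update_eq i c d y s]
  have h2 : affineT i c d y i = c * y i + d := by simp [affineT]
  simp only [h1, h2]
  exact deriv_affine_comp (fun t => F (Function.update y i t)) c d (y i) hc

theorem IG_ASI {n : ℕ} (a b : Fin n → ℝ) (F : (Fin n → ℝ) → ℝ)
    (hF : ContDiffOn ℝ 1 F (Set.uIcc a b))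
    (i : Fin n) (c d : ℝ) (hc : c ≠ 0)
    (xbar x' : Fin n → ℝ)
    (hxbar : xbar ∈ Set.uIcc a b) (hx' : x' ∈ Set.uIcc a b)
    (hTxbar : affineT i c d xbar ∈ Set.uIcc a b) (hTx' : affineT i c d x' ∈ Set.uIcc a b) :
    IG xbar x' F = IG (affineT i c d xbar) (affineT i c d x') (F ∘ affineTinv i c d) := by
  funext j
  simp only [IG]
  by_cases hj : j = i
  · subst hj
    have h1 : ∀ t : ℝ, pderiv' (F ∘ affineTinv j c d) j
        (affineT j c d x' + t • (affineT j c d xbar - affineT j c d x'))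
        = c⁻¹ * pderiv' F j (x' + t • (xbar - x')) := fun t => by
      rw [path_eq, pderiv_eq F j c d hc]
    simp only [h1]
    rw [intervalIntegral.integral_const_mul]
    have h2 : affineT j c d xbar j = c * xbar j + d := by simp [affineT]
    have h3 : affineT j c d x' j = c * x' j + d := by simp [affineT]
    rw [h2, h3]
    field_simp
    ring
  · have h1 : ∀ t : ℝ, pderiv' (F ∘ affineTinv i c d) j
        (affineT i c d x' + t • (affineT i c d xbar - affineT i c d x'))
        = pderiv' F j (x' + t • (xbar - x')) := fun t => by
      rw [path_eq, pderiv_ne F i j hj c d hc]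
    simp only [h1]
    have h2 : affineT i c d xbar j = xbar j := Function.update_of_ne hj _ _
    have h3 : affineT i c d x' j = x' j := Function.update_of_ne hj _ _
    rw [h2, h3]
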